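/- In the setting of the previous theorem (skew CY category with F = Σ^d T^ℓ Φ, scalars s, t, object X with isomorphism φ : X → Φ(X), and E(X) the bigraded endomorphism algebra), the map μ sending a homogeneous element g ∈ Hom(X, Σ^i T^j X) to (-s)^i t^j · Σ^i T^j(φ)^{-1} ∘ Φ(g) ∘ φ is a Nakayama automorphism of the Frobenius algebra E(X), i.e. (f, g) = (μ(g), f) for all homogeneous f, g. -/

import Mathlib

open CategoryTheory


private lemma map_surj_of_strict_inv {C : Type*} [Category C] {F G : C ⥤ C}
    (hFG : F ⋙ G = 𝟭 C) (hGF : G ⋙ F = 𝟭 C) {A B : C} (y : F.obj A ⟶ F.obj B) :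
    ∃ x : A ⟶ B, F.map x = y := by
  refine ⟨eqToHom (Functor.congr_obj hFG A).symm ≫ G.map y ≫ eqToHom (Functor.congr_obj hFG B), ?_⟩
  simp only [Functor.map_comp, eqToHom_map]
  rw [show F.map (G.map y) = (G ⋙ F).map y from rfl, Functor.congr_hom hGF y]
  simp

private lemma map_inj_of_strict_inv {C : Type*} [Category C] {F G : C ⥤ C}
    (hFG : F ⋙ G = 𝟭 C) {A B : C} (x x' : A ⟶ B) (h : F.map x = F.map x') : x = x' := by
  have h2 := congrArg G.map h
  rw [show G.map (F.map x) = (F ⋙ G).map x from rfl,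
    show G.map (F.map x') = (F ⋙ G).map x' from rfl,
    Functor.congr_hom hFG x, Functor.congr_hom hFG x'] at h2
  rw [cancel_epi, cancel_mono] at h2
  exact h2

private lemma hdag_aux {C : Type*} [Category C] (G : C ⥤ C) {P Q : C} (u : P ⟶ Q) [IsIso u]
    {X₁ X₂ X₃ X₄ Y Z₁ Z₂ : C} {p0 p0' : X₁ = X₂} {a : X₂ ⟶ X₃} {b : X₃ ⟶ X₄}
    {p1 : X₄ = G.obj Q} {p2 : G.obj P = Z₁} {p3 : Z₁ = Z₂} {p4 : Z₂ = G.obj P}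
    {p5 : G.obj Q = Y} {p8 : X₄ = Y} :
    eqToHom p0 ≫ a ≫ b ≫ eqToHom p1 ≫ G.map (inv u) ≫ eqToHom p2 ≫ eqToHom p3 ≫
      eqToHom p4 ≫ G.map u ≫ eqToHom p5 = eqToHom p0' ≫ a ≫ b ≫ eqToHom p8 := by
  subst p0 p1 p2 p3 p5
  simp [← Functor.map_comp_assoc]

/-- `sh S T i j X` denotes `Σ^i T^j X`. -/
def sh {C : Type*} [Category C] (S T : ℤ → C ⥤ C) (i j : ℤ) (X : C) : C :=
  (S i).obj ((T j).obj X)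

/-- Graded (bigraded) composition `a * b = Σ^i T^j(a) ∘ b` of homogeneous elements of
the endomorphism algebra `E(X₀)`, where `a` has bidegree `(p,q)` and `b` has
bidegree `(i,j)`. -/
def gmul {C : Type*} [Category C] (S T : ℤ → C ⥤ C)
    (hcomb : ∀ (i j i' j' : ℤ) (X : C),
      sh S T i j (sh S T i' j' X) = sh S T (i + i') (j + j') X)
    {X₀ : C} {p q i j : ℤ}
    (a : X₀ ⟶ sh S T p q X₀) (b : X₀ ⟶ sh S T i j X₀) :
    X₀ ⟶ sh S T (i + p) (j + q) X₀ :=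
  b ≫ (S i).map ((T j).map a) ≫ eqToHom (hcomb i j p q X₀)

/-- The Frobenius bilinear form `(f, g) = Tr_X(φ * f * g)` on `E(X₀)`, for `g` of
bidegree `(i,j)` and `f` of bidegree `(p,q)` with `(p,q) + (i,j) = (d,ℓ)` (the
latter being witnessed by the object identification `e`). -/
def pairB {k : Type*} [Field k] {C : Type*} [Category C]
    [Preadditive C] [CategoryTheory.Linear k C]
    (S T : ℤ → C ⥤ C) (Φ : C ⥤ C) (d ℓ : ℤ)
    (Tr : ∀ X : C, (X ⟶ sh S T d ℓ (Φ.obj X)) →ₗ[k] k)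
    {X₀ : C} (φ : X₀ ⟶ Φ.obj X₀) {p q i j : ℤ}
    (f : X₀ ⟶ sh S T p q X₀) (g : X₀ ⟶ sh S T i j X₀)
    (e : sh S T i j (sh S T p q X₀) = sh S T d ℓ X₀) : k :=
  Tr X₀ (g ≫ (S i).map ((T j).map f) ≫ eqToHom e ≫ (S d).map ((T ℓ).map φ))

/-- Theorem 2.7, Nakayama automorphism: in a bigraded Hom-finite
`k`-linear triangulated category satisfying the skew Calabi-Yau hypothesis with
Serre functor `F = Σ^d T^ℓ Φ` and scalars `s, t`, if `X₀` is an object with an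
isomorphism `φ : X₀ → Φ(X₀)`, then the bilinear form
`(f,g) = Tr_{X₀}(φ * f * g)` on `E(X₀) = ⊕ Hom(X₀, Σ^i T^j X₀)` is associative
and nondegenerate; hence `E(X₀)` is a bigraded Frobenius algebra. -/
theorem ext_algebra_nakayama {k : Type*} [Field k] {C : Type*} [Category C]
    [Preadditive C] [CategoryTheory.Linear k C]
    [hfin : ∀ X Y : C, FiniteDimensional k (X ⟶ Y)]
    (S T : ℤ → C ⥤ C) (Φ : C ⥤ C) [Φ.IsEquivalence]
    (hS0 : S 0 = 𝟭 C) (hSadd : ∀ i j : ℤ, S (i + j) = S j ⋙ S i)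
    (hT0 : T 0 = 𝟭 C) (hTadd : ∀ i j : ℤ, T (i + j) = T j ⋙ T i)
    (hST : ∀ i j : ℤ, S i ⋙ T j = T j ⋙ S i)
    (hSΦ : ∀ i : ℤ, S i ⋙ Φ = Φ ⋙ S i)
    (hTΦ : ∀ j : ℤ, T j ⋙ Φ = Φ ⋙ T j)
    (hcomb : ∀ (i j i' j' : ℤ) (X : C),
      sh S T i j (sh S T i' j' X) = sh S T (i + i') (j + j') X)
    (hΦsh : ∀ (i j : ℤ) (X : C), Φ.obj (sh S T i j X) = sh S T i j (Φ.obj X))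
    (d ℓ : ℤ) (s t : k) (hs : s ≠ 0) (ht : t ≠ 0)
    (Tr : ∀ X : C, (X ⟶ sh S T d ℓ (Φ.obj X)) →ₗ[k] k)
    (htrace0 : ∀ (X Y : C) (f : X ⟶ Y) (g : Y ⟶ sh S T d ℓ (Φ.obj X)),
      Tr X (f ≫ g) = Tr Y (g ≫ (S d).map ((T ℓ).map (Φ.map f))))
    (htr : ∀ (i j : ℤ) (X : C)
      (f : sh S T i j X ⟶ sh S T d ℓ (Φ.obj (sh S T i j X)))
      (h : X ⟶ sh S T d ℓ (Φ.obj X)),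
      (S i).map ((T j).map h) = (s ^ i * t ^ j) • (f ≫ eqToHom
        (by rw [hΦsh, hcomb, hcomb, add_comm d i, add_comm ℓ j] :
          sh S T d ℓ (Φ.obj (sh S T i j X)) = sh S T i j (sh S T d ℓ (Φ.obj X)))) →
      Tr X h = (-1 : k) ^ i * Tr (sh S T i j X) f)
    (X₀ : C) (φ : X₀ ⟶ Φ.obj X₀) [IsIso φ]
    -- nondegeneracy of the Serre duality trace pairing
    (hnd₁ : ∀ (W : C) (g : W ⟶ sh S T d ℓ (Φ.obj X₀)),
      (∀ f : X₀ ⟶ W, Tr X₀ (f ≫ g) = 0) → g = 0)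
    (hnd₂ : ∀ (W : C) (f : X₀ ⟶ W),
      (∀ g : W ⟶ sh S T d ℓ (Φ.obj X₀), Tr X₀ (f ≫ g) = 0) → f = 0)
    -- the map `g ↦ (-s)^i t^j · φ^{-1} ∘ Φ(g) ∘ φ` satisfies the defining
    -- property `(f, g) = (μ(g), f)` of a Nakayama automorphism of `E(X₀)`:
    (i j : ℤ) (g : X₀ ⟶ sh S T i j X₀) (f : X₀ ⟶ sh S T (d - i) (ℓ - j) X₀) :
    pairB S T Φ d ℓ Tr φ f g
        (by rw [hcomb, show i + (d - i) = d from by ring,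
            show j + (ℓ - j) = ℓ from by ring]) =
      pairB S T Φ d ℓ Tr φ
        (((-s) ^ i * t ^ j) •
          (φ ≫ Φ.map g ≫ eqToHom (hΦsh i j X₀) ≫ (S i).map ((T j).map (inv φ))))
        f
        (by rw [hcomb, show d - i + i = d from by ring,
            show ℓ - j + j = ℓ from by ring]) := by
  -- strict inverses for the shift functors
  have hFG : ∀ a b : ℤ, (T b ⋙ S a) ⋙ (S (-a) ⋙ T (-b)) = 𝟭 C := by
    intro a b
    calc (T b ⋙ S a) ⋙ (S (-a) ⋙ T (-b)) = T b ⋙ (S a ⋙ S (-a)) ⋙ T (-b) := rfl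
      _ = T b ⋙ 𝟭 C ⋙ T (-b) := by rw [← hSadd (-a) a, neg_add_cancel, hS0]
      _ = T b ⋙ T (-b) := by rw [Functor.id_comp]
      _ = 𝟭 C := by rw [← hTadd (-b) b, neg_add_cancel, hT0]
  have hGF : ∀ a b : ℤ, (S (-a) ⋙ T (-b)) ⋙ (T b ⋙ S a) = 𝟭 C := by
    intro a b
    calc (S (-a) ⋙ T (-b)) ⋙ (T b ⋙ S a) = S (-a) ⋙ (T (-b) ⋙ T b) ⋙ S a := rfl
      _ = S (-a) ⋙ 𝟭 C ⋙ S a := by rw [← hTadd b (-b), add_neg_cancel, hT0]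
      _ = S (-a) ⋙ S a := by rw [Functor.id_comp]
      _ = 𝟭 C := by rw [← hSadd a (-a), add_neg_cancel, hS0]
  have hsurj : ∀ (a b : ℤ) {A B : C} (y : sh S T a b A ⟶ sh S T a b B),
      ∃ x : A ⟶ B, (S a).map ((T b).map x) = y :=
    fun a b _ _ y => map_surj_of_strict_inv (hFG a b) (hGF a b) y
  have hinj : ∀ (a b : ℤ) {A B : C} (x x' : A ⟶ B),
      (S a).map ((T b).map x) = (S a).map ((T b).map x') → x = x' :=
    fun a b _ _ x x' h => map_inj_of_strict_inv (hFG a b) x x' h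
  -- functor recombination equalities
  have E1 : T (ℓ-j) ⋙ S (d-i) ⋙ T j ⋙ S i = T ℓ ⋙ S d := by
    calc T (ℓ-j) ⋙ S (d-i) ⋙ T j ⋙ S i = T (ℓ-j) ⋙ (S (d-i) ⋙ T j) ⋙ S i := rfl
      _ = T (ℓ-j) ⋙ (T j ⋙ S (d-i)) ⋙ S i := by rw [hST]
      _ = (T (ℓ-j) ⋙ T j) ⋙ (S (d-i) ⋙ S i) := rfl
      _ = T ℓ ⋙ S d := by
          rw [← hTadd j (ℓ-j), ← hSadd i (d-i), show j + (ℓ-j) = ℓ from by ring,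
            show i + (d-i) = d from by ring]
  have E3 : T j ⋙ S i ⋙ T ℓ ⋙ S d = T (ℓ+j) ⋙ S (d+i) := by
    calc T j ⋙ S i ⋙ T ℓ ⋙ S d = T j ⋙ (S i ⋙ T ℓ) ⋙ S d := rfl
      _ = T j ⋙ (T ℓ ⋙ S i) ⋙ S d := by rw [hST]
      _ = (T j ⋙ T ℓ) ⋙ (S i ⋙ S d) := rfl
      _ = T (ℓ+j) ⋙ S (d+i) := by rw [← hTadd ℓ j, ← hSadd d i]
  have E4 : T ℓ ⋙ S d ⋙ T j ⋙ S i = T (ℓ+j) ⋙ S (d+i) := by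
    calc T ℓ ⋙ S d ⋙ T j ⋙ S i = T ℓ ⋙ (S d ⋙ T j) ⋙ S i := rfl
      _ = T ℓ ⋙ (T j ⋙ S d) ⋙ S i := by rw [hST]
      _ = (T ℓ ⋙ T j) ⋙ (S d ⋙ S i) := rfl
      _ = T (ℓ+j) ⋙ S (d+i) := by
          rw [← hTadd j ℓ, ← hSadd i d, add_comm j ℓ, add_comm i d]
  have E1ob : ∀ A : C, sh S T i j (sh S T (d-i) (ℓ-j) A) = sh S T d ℓ A :=
    fun A => Functor.congr_obj E1 A
  have E3ob : ∀ A : C, sh S T d ℓ (sh S T i j A) = sh S T (d+i) (ℓ+j) A :=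
    fun A => Functor.congr_obj E3 A
  have E4ob : ∀ A : C, sh S T i j (sh S T d ℓ A) = sh S T (d+i) (ℓ+j) A :=
    fun A => Functor.congr_obj E4 A
  have conv1 : ∀ {A B : C} (x : A ⟶ B),
      (S i).map ((T j).map ((S (d-i)).map ((T (ℓ-j)).map x)))
        = eqToHom (E1ob A) ≫ (S d).map ((T ℓ).map x) ≫ eqToHom (E1ob B).symm :=
    fun x => Functor.congr_hom E1 x
  have conv3 : ∀ {A B : C} (x : A ⟶ B),
      (S d).map ((T ℓ).map ((S i).map ((T j).map x)))
        = eqToHom (E3ob A) ≫ (S (d+i)).map ((T (ℓ+j)).map x) ≫ eqToHom (E3ob B).symm :=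
    fun x => Functor.congr_hom E3 x
  have conv4 : ∀ {A B : C} (x : A ⟶ B),
      (S i).map ((T j).map ((S d).map ((T ℓ).map x)))
        = eqToHom (E4ob A) ≫ (S (d+i)).map ((T (ℓ+j)).map x) ≫ eqToHom (E4ob B).symm :=
    fun x => Functor.congr_hom E4 x
  have E' : ∀ (a b : ℤ) (X : C),
      sh S T d ℓ (Φ.obj (sh S T a b X)) = sh S T a b (sh S T d ℓ (Φ.obj X)) :=
    fun a b X => by rw [hΦsh, hcomb, hcomb, add_comm d a, add_comm ℓ b]
  -- scalar facts
  have hm1 : ∀ a : ℤ, ((-1:k)^a) * ((-1:k)^a) = 1 := by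
    intro a; rw [← mul_zpow]; norm_num
  have hst : ∀ a b : ℤ, (s^a * t^b : k) ≠ 0 :=
    fun a b => mul_ne_zero (zpow_ne_zero _ hs) (zpow_ne_zero _ ht)
  -- linearized form of the shifted-trace axiom
  have hL : ∀ (a b : ℤ) (X : C) (h : X ⟶ sh S T d ℓ (Φ.obj X)),
      Tr (sh S T a b X) (((S a).map ((T b).map h)) ≫ eqToHom (E' a b X).symm)
        = ((-1:k)^a * (s^a * t^b)) * Tr X h := by
    intro a b X h
    have hcond : (S a).map ((T b).map h)
        = (s^a * t^b) • (((s^a*t^b)⁻¹ •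
            (((S a).map ((T b).map h)) ≫ eqToHom (E' a b X).symm)) ≫ eqToHom (E' a b X)) := by
      rw [Linear.smul_comp, smul_smul, mul_inv_cancel₀ (hst a b), one_smul,
        Category.assoc]
      erw [eqToHom_trans, eqToHom_refl, Category.comp_id]
    have h2 := htr a b X ((s^a*t^b)⁻¹ •
        (((S a).map ((T b).map h)) ≫ eqToHom (E' a b X).symm)) h hcond
    erw [map_smul, smul_eq_mul] at h2
    rw [h2]
    change _ = _ * (_ * (_ * Tr (sh S T a b X) (((S a).map ((T b).map h)) ≫ eqToHom (E' a b X).symm)))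
    generalize Tr (sh S T a b X) (((S a).map ((T b).map h)) ≫ eqToHom (E' a b X).symm) = c₀
    calc c₀ = (((-1:k)^a * (-1:k)^a) * ((s^a*t^b) * (s^a*t^b)⁻¹)) * c₀ := by
          rw [hm1 a, mul_inv_cancel₀ (hst a b)]; ring
      _ = (-1:k)^a * (s^a * t^b) * ((-1:k)^a * ((s^a*t^b)⁻¹ * c₀)) := by ring
  -- objects and key morphisms
  have eA : sh S T i j (sh S T (d-i) (ℓ-j) X₀) = sh S T d ℓ X₀ := E1ob X₀
  have eB : sh S T (d-i) (ℓ-j) (sh S T i j X₀) = sh S T d ℓ X₀ := by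
    rw [hcomb, show d-i+i = d from by ring, show ℓ-j+j = ℓ from by ring]
  set m : X₀ ⟶ sh S T i j X₀ :=
    φ ≫ Φ.map g ≫ eqToHom (hΦsh i j X₀) ≫ (S i).map ((T j).map (inv φ)) with m_def
  obtain ⟨Q, hQ⟩ := hsurj i j
    (eqToHom eA ≫ (S d).map ((T ℓ).map φ) ≫ (S d).map ((T ℓ).map (Φ.map g))
      ≫ eqToHom (E' i j X₀))
  obtain ⟨P, hP⟩ := hsurj (d-i) (ℓ-j)
    ((eqToHom eB ≫ (S d).map ((T ℓ).map φ) ≫ (S d).map ((T ℓ).map (Φ.map f)))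
      ≫ eqToHom (E' (d-i) (ℓ-j) X₀))
  -- the core diagram chase
  have hdag : (S i).map ((T j).map
        ((S (d-i)).map ((T (ℓ-j)).map m) ≫ eqToHom eB ≫ (S d).map ((T ℓ).map φ)))
      = eqToHom eA ≫ (S d).map ((T ℓ).map φ) ≫ (S d).map ((T ℓ).map (Φ.map g))
          ≫ eqToHom (E' i j X₀) := by
    simp only [Functor.map_comp, eqToHom_map]
    rw [conv1 m]
    erw [Functor.map_comp (T j) (eqToHom eB) ((S d).map ((T ℓ).map φ)), Functor.map_comp (S i), conv4 φ]
    rw [m_def]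
    simp only [Functor.map_comp, eqToHom_map]
    erw [Functor.map_comp (T ℓ) (eqToHom _), Functor.map_comp (S d) ((T ℓ).map (eqToHom _)), conv3 (inv φ)]
    repeat erw [Category.assoc]
    erw [eqToHom_map, eqToHom_map, eqToHom_map, eqToHom_trans_assoc, eqToHom_trans_assoc]
    exact hdag_aux (T (ℓ+j) ⋙ S (d+i)) φ
  have hQ2 : Q = (S (d-i)).map ((T (ℓ-j)).map m) ≫ eqToHom eB ≫ (S d).map ((T ℓ).map φ) :=
    hinj i j _ _ (hQ.trans hdag.symm)
  have hPt : ∀ (z : X₀ ⟶ sh S T i j X₀),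
      (S (d-i)).map ((T (ℓ-j)).map (z ≫ P)) ≫ eqToHom (E' (d-i) (ℓ-j) X₀).symm
        = (S (d-i)).map ((T (ℓ-j)).map z) ≫ eqToHom eB ≫ (S d).map ((T ℓ).map φ)
            ≫ (S d).map ((T ℓ).map (Φ.map f)) := by
    intro z
    simp only [Functor.map_comp, hP, Category.assoc, eqToHom_trans, eqToHom_refl,
      Category.comp_id]
    erw [Category.assoc, Category.assoc, Category.assoc, eqToHom_trans, eqToHom_refl, Category.comp_id]
    rfl
  have Lval : Tr X₀ (g ≫ (S i).map ((T j).map f) ≫ eqToHom eA ≫ (S d).map ((T ℓ).map φ))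
      = ((-1:k)^i * (s^i*t^j)) * (((-1:k)^(d-i) * (s^(d-i)*t^(ℓ-j))) * Tr X₀ (m ≫ P)) := by
    rw [htrace0 X₀ (sh S T i j X₀) g
      ((S i).map ((T j).map f) ≫ eqToHom eA ≫ (S d).map ((T ℓ).map φ))]
    have l2 : (S i).map ((T j).map (f ≫ Q)) ≫ eqToHom (E' i j X₀).symm
        = ((S i).map ((T j).map f) ≫ eqToHom eA ≫ (S d).map ((T ℓ).map φ))
            ≫ (S d).map ((T ℓ).map (Φ.map g)) := by
      simp only [Functor.map_comp, hQ, Category.assoc, eqToHom_trans, eqToHom_refl,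
        Category.comp_id]
      erw [Category.assoc, Category.assoc, Category.assoc, Category.assoc, eqToHom_trans, eqToHom_refl, Category.comp_id]
      exact congrArg _ (Category.assoc _ _ _).symm
    erw [← l2]
    erw [hL i j X₀ (f ≫ Q)]
    rw [ htrace0 X₀ (sh S T (d-i) (ℓ-j) X₀) f Q]
    have l3 : (S (d-i)).map ((T (ℓ-j)).map (m ≫ P)) ≫ eqToHom (E' (d-i) (ℓ-j) X₀).symm
        = Q ≫ (S d).map ((T ℓ).map (Φ.map f)) := by
      rw [hQ2, hPt m]
      erw [Category.assoc, Category.assoc]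
      rfl
    erw [← l3, hL (d-i) (ℓ-j) X₀ (m ≫ P)]
  have Rval : Tr X₀ (f ≫ (S (d-i)).map ((T (ℓ-j)).map (((-s)^i * t^j) • m))
        ≫ eqToHom eB ≫ (S d).map ((T ℓ).map φ))
      = ((-1:k)^(d-i) * (s^(d-i)*t^(ℓ-j))) * (((-s)^i*t^j) * Tr X₀ (m ≫ P)) := by
    rw [htrace0 X₀ (sh S T (d-i) (ℓ-j) X₀) f
      ((S (d-i)).map ((T (ℓ-j)).map (((-s)^i * t^j) • m))
        ≫ eqToHom eB ≫ (S d).map ((T ℓ).map φ))]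
    have r2 : (S (d-i)).map ((T (ℓ-j)).map ((((-s)^i * t^j) • m) ≫ P))
          ≫ eqToHom (E' (d-i) (ℓ-j) X₀).symm
        = ((S (d-i)).map ((T (ℓ-j)).map (((-s)^i * t^j) • m))
            ≫ eqToHom eB ≫ (S d).map ((T ℓ).map φ)) ≫ (S d).map ((T ℓ).map (Φ.map f)) := by
      rw [hPt (((-s)^i * t^j) • m)]
      simp only [Category.assoc]
      erw [← Category.assoc (eqToHom eB)]
      rfl
    erw [← r2, hL (d-i) (ℓ-j) X₀ ((((-s)^i * t^j) • m) ≫ P)]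
    rw [Linear.smul_comp, map_smul,
      smul_eq_mul]
  unfold pairB
  rw [Lval]
  erw [Rval]
  rw [show ((-s : k))^i = (-1:k)^i * s^i from by rw [← mul_zpow]; norm_num]
  ring
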